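/- Let p₁ = N(μ₁, Σ), p₂ = N(μ₂, Σ) on ℝ^D with Σ positive definite and μ₁ ≠ μ₂, and let b ∈ ℝ. Define a = Σ⁻¹(μ₁−μ₂), μ' = (μ₁+μ₂)/2, A = b(I − aaᵀ/‖a‖²) − Σ⁻¹, and α(x) = exp(−½(x−μ')ᵀA(x−μ')). Then (∇log α(x))ᵀ(Σ⁻¹(μ₁−μ₂)) + g(x) = 0 for all x, where g(x) = ½(∇²p₁(x)/p₁(x) − ∇²p₂(x)/p₂(x)). That is, the whole one-parameter family of weights indexed by b eliminates the leading-order bias. -/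

import Mathlib

open Real Matrix

/-- Laplacian of a scalar function on `ℝ^D`. -/
noncomputable def lap {D : ℕ} (f : EuclideanSpace ℝ (Fin D) → ℝ)
    (x : EuclideanSpace ℝ (Fin D)) : ℝ :=
  ∑ i, fderiv ℝ (fun y => fderiv ℝ f y (EuclideanSpace.single i 1)) x
      (EuclideanSpace.single i 1)

/-- Quadratic form `vᵀ M v`. -/
def quadForm {D : ℕ} (M : Matrix (Fin D) (Fin D) ℝ) (v : Fin D → ℝ) : ℝ :=
  ∑ i, ∑ j, v i * M i j * v j

/-- Multivariate Gaussian density `N(x; μ, S)` on `ℝ^D`. -/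
noncomputable def gaussDensity {D : ℕ} (μ : Fin D → ℝ)
    (S : Matrix (Fin D) (Fin D) ℝ) (x : EuclideanSpace ℝ (Fin D)) : ℝ :=
  (2 * π) ^ (-(D : ℝ) / 2) * S.det ^ (-(1 : ℝ) / 2) *
    Real.exp (-(1 / 2) * quadForm S⁻¹ (fun i => x i - μ i))

/-- the (unnormalized) gradient vector of a shifted quadratic form -/
def gvec {D : ℕ} (M : Matrix (Fin D) (Fin D) ℝ) (μ : Fin D → ℝ)
    (y : EuclideanSpace ℝ (Fin D)) (i : Fin D) : ℝ :=
  ∑ j, (M i j + M j i) * (y j - μ j)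

noncomputable def gclm {D : ℕ} (M : Matrix (Fin D) (Fin D) ℝ) (μ : Fin D → ℝ)
    (x : EuclideanSpace ℝ (Fin D)) : EuclideanSpace ℝ (Fin D) →L[ℝ] ℝ :=
  ∑ i, gvec M μ x i • (EuclideanSpace.proj i)

lemma gclm_apply {D : ℕ} (M : Matrix (Fin D) (Fin D) ℝ) (μ : Fin D → ℝ)
    (x v : EuclideanSpace ℝ (Fin D)) :
    gclm M μ x v = ∑ i, gvec M μ x i * v i := by
  simp [gclm]

lemma gclm_single {D : ℕ} (M : Matrix (Fin D) (Fin D) ℝ) (μ : Fin D → ℝ)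
    (x : EuclideanSpace ℝ (Fin D)) (i : Fin D) :
    gclm M μ x (EuclideanSpace.single i 1) = gvec M μ x i := by
  rw [gclm_apply]
  simp [EuclideanSpace.single_apply]

lemma hasFDerivAt_quad {D : ℕ} (M : Matrix (Fin D) (Fin D) ℝ) (μ : Fin D → ℝ)
    (x : EuclideanSpace ℝ (Fin D)) :
    HasFDerivAt (fun y : EuclideanSpace ℝ (Fin D) => quadForm M (fun i => y i - μ i))
      (gclm M μ x) x := by
  have h : ∀ i j : Fin D,
      HasFDerivAt (fun y : EuclideanSpace ℝ (Fin D) => (y i - μ i) * M i j * (y j - μ j))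
        (((x i - μ i) * M i j) • (EuclideanSpace.proj j : EuclideanSpace ℝ (Fin D) →L[ℝ] ℝ)
          + (x j - μ j) • ((M i j) • (EuclideanSpace.proj i : EuclideanSpace ℝ (Fin D) →L[ℝ] ℝ))) x := by
    intro i j
    have hi : HasFDerivAt (fun y : EuclideanSpace ℝ (Fin D) => y i - μ i)
        (EuclideanSpace.proj i : EuclideanSpace ℝ (Fin D) →L[ℝ] ℝ) x :=
      ((EuclideanSpace.proj i : EuclideanSpace ℝ (Fin D) →L[ℝ] ℝ).hasFDerivAt).sub_const (μ i)
    have hj : HasFDerivAt (fun y : EuclideanSpace ℝ (Fin D) => y j - μ j)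
        (EuclideanSpace.proj j : EuclideanSpace ℝ (Fin D) →L[ℝ] ℝ) x :=
      ((EuclideanSpace.proj j : EuclideanSpace ℝ (Fin D) →L[ℝ] ℝ).hasFDerivAt).sub_const (μ j)
    exact (hi.mul_const (M i j)).mul hj
  have hsum : HasFDerivAt
      (fun y : EuclideanSpace ℝ (Fin D) => ∑ i, ∑ j, (y i - μ i) * M i j * (y j - μ j))
      (∑ i, ∑ j, (((x i - μ i) * M i j) • (EuclideanSpace.proj j : EuclideanSpace ℝ (Fin D) →L[ℝ] ℝ)
          + (x j - μ j) • ((M i j) • (EuclideanSpace.proj i : EuclideanSpace ℝ (Fin D) →L[ℝ] ℝ)))) x :=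
    HasFDerivAt.fun_sum fun i _ => HasFDerivAt.fun_sum fun j _ => h i j
  have heq : (∑ i, ∑ j, (((x i - μ i) * M i j) • (EuclideanSpace.proj j : EuclideanSpace ℝ (Fin D) →L[ℝ] ℝ)
          + (x j - μ j) • ((M i j) • (EuclideanSpace.proj i : EuclideanSpace ℝ (Fin D) →L[ℝ] ℝ))))
        = gclm M μ x := by
    ext v
    simp only [ContinuousLinearMap.sum_apply, ContinuousLinearMap.add_apply,
      ContinuousLinearMap.smul_apply, PiLp.proj_apply, smul_eq_mul, gclm_apply, gvec]
    simp only [Finset.sum_add_distrib]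
    rw [Finset.sum_comm (s := (Finset.univ : Finset (Fin D))) (t := (Finset.univ : Finset (Fin D)))
      (f := fun i j => (x i - μ i) * M i j * v j)]
    rw [← Finset.sum_add_distrib]
    refine Finset.sum_congr rfl fun i _ => ?_
    rw [Finset.sum_mul, ← Finset.sum_add_distrib]
    refine Finset.sum_congr rfl fun j _ => ?_
    ring
  rw [← heq]
  exact hsum

lemma hasFDerivAt_gaussLike {D : ℕ} (c : ℝ) (M : Matrix (Fin D) (Fin D) ℝ) (μ : Fin D → ℝ)
    (x : EuclideanSpace ℝ (Fin D)) :
    HasFDerivAt (fun y : EuclideanSpace ℝ (Fin D) =>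
        c * Real.exp (-(1 / 2) * quadForm M (fun i => y i - μ i)))
      ((c * Real.exp (-(1 / 2) * quadForm M (fun i => x i - μ i)) * (-(1 / 2))) • gclm M μ x) x := by
  have h1 := (hasFDerivAt_quad M μ x).const_mul (-(1 / 2) : ℝ)
  have h2 := h1.exp.const_mul c
  refine h2.congr_fderiv ?_
  rw [smul_smul, smul_smul, mul_assoc]

lemma lap_gaussLike {D : ℕ} (c : ℝ) (M : Matrix (Fin D) (Fin D) ℝ) (μ : Fin D → ℝ)
    (x : EuclideanSpace ℝ (Fin D)) :
    lap (fun y => c * Real.exp (-(1 / 2) * quadForm M (fun i => y i - μ i))) x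
      = (c * Real.exp (-(1 / 2) * quadForm M (fun i => x i - μ i))) *
        ∑ i, ((1 / 4) * (gvec M μ x i) ^ 2 - M i i) := by
  set p : EuclideanSpace ℝ (Fin D) → ℝ :=
    fun y => c * Real.exp (-(1 / 2) * quadForm M (fun i => y i - μ i)) with hp
  have hder : ∀ y, HasFDerivAt p ((p y * (-(1 / 2))) • gclm M μ y) y :=
    fun y => hasFDerivAt_gaussLike c M μ y
  have hfd : ∀ (i : Fin D) y, fderiv ℝ p y (EuclideanSpace.single i 1)
      = -(1 / 2) * (p y * gvec M μ y i) := by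
    intro i y
    rw [(hder y).fderiv]
    rw [ContinuousLinearMap.smul_apply, gclm_single, smul_eq_mul]
    ring
  have key : ∀ i : Fin D,
      fderiv ℝ (fun y => fderiv ℝ p y (EuclideanSpace.single i 1)) x (EuclideanSpace.single i 1)
        = p x * ((1 / 4) * (gvec M μ x i) ^ 2 - M i i) := by
    intro i
    have hres : (fun y => fderiv ℝ p y (EuclideanSpace.single i 1))
        = fun y => -(1 / 2) * (p y * gvec M μ y i) := funext (hfd i)
    rw [hres]
    have hg : HasFDerivAt (fun y : EuclideanSpace ℝ (Fin D) => gvec M μ y i)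
        (∑ j, (M i j + M j i) • (EuclideanSpace.proj j : EuclideanSpace ℝ (Fin D) →L[ℝ] ℝ)) x := by
      unfold gvec
      refine HasFDerivAt.fun_sum fun j _ => ?_
      exact (((EuclideanSpace.proj j : EuclideanSpace ℝ (Fin D) →L[ℝ] ℝ).hasFDerivAt).sub_const
        (μ j)).const_mul _
    have hprod := ((hder x).fun_mul hg).const_mul (-(1 / 2) : ℝ)
    rw [hprod.fderiv]
    simp only [ContinuousLinearMap.smul_apply, ContinuousLinearMap.add_apply,
      ContinuousLinearMap.sum_apply, gclm_single, PiLp.proj_apply, smul_eq_mul,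
      EuclideanSpace.single_apply]
    rw [show (∑ j : Fin D, (M i j + M j i) * if j = i then 1 else 0)
        = M i i + M i i by simp [mul_ite, Finset.sum_ite_eq']]
    ring
  unfold lap
  rw [Finset.sum_congr rfl fun i _ => key i, ← Finset.mul_sum]


theorem weight_family_kills_bias {D : ℕ}
    (μ₁ μ₂ : Fin D → ℝ) (S : Matrix (Fin D) (Fin D) ℝ)
    (hS : S.PosDef) (hμ : μ₁ ≠ μ₂) (b : ℝ) :
    let a : Fin D → ℝ := S⁻¹.mulVec (μ₁ - μ₂)
    let μ' : Fin D → ℝ := fun i => (μ₁ i + μ₂ i) / 2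
    let A : Matrix (Fin D) (Fin D) ℝ :=
      b • (1 - (∑ i, a i ^ 2)⁻¹ • Matrix.vecMulVec a a) - S⁻¹
    let α : EuclideanSpace ℝ (Fin D) → ℝ := fun x =>
      Real.exp (-(1 / 2) * quadForm A (fun i => x i - μ' i))
    let p₁ := gaussDensity μ₁ S
    let p₂ := gaussDensity μ₂ S
    ∀ x : EuclideanSpace ℝ (Fin D),
      (inner ℝ (gradient (fun y => Real.log (α y)) x)
          (WithLp.toLp 2 (fun i => S⁻¹.mulVec (μ₁ - μ₂) i : Fin D → ℝ) :
            EuclideanSpace ℝ (Fin D)) : ℝ)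
        + (1 / 2) * (lap p₁ x / p₁ x - lap p₂ x / p₂ x) = 0 := by
  intro a μ' A α p₁ p₂ x
  have ha' : a = S⁻¹.mulVec (μ₁ - μ₂) := rfl
  have hμ'' : ∀ i, μ' i = (μ₁ i + μ₂ i) / 2 := fun i => rfl
  have hα : α = fun x => Real.exp (-(1 / 2) * quadForm A (fun i => x i - μ' i)) := rfl
  have hp₁ : p₁ = gaussDensity μ₁ S := rfl
  have hp₂ : p₂ = gaussDensity μ₂ S := rfl
  -- symmetry of S⁻¹
  have hMsymm : ∀ i j, S⁻¹ j i = S⁻¹ i j := by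
    intro i j
    have h : S⁻¹ᴴ = S⁻¹ := hS.isHermitian.inv
    have h2 := congrFun (congrFun h i) j
    simpa [Matrix.conjTranspose_apply] using h2
  -- entries of A
  have hAij : ∀ i j, A i j
      = b * ((if i = j then 1 else 0) - (∑ k, a k ^ 2)⁻¹ * (a i * a j)) - S⁻¹ i j := by
    intro i j
    show (b • (1 - (∑ k, a k ^ 2)⁻¹ • Matrix.vecMulVec a a) - S⁻¹) i j = _
    simp [Matrix.sub_apply, Matrix.smul_apply, Matrix.one_apply, Matrix.vecMulVec_apply,
      smul_eq_mul, mul_sub]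
  -- a ≠ 0
  have hdet : IsUnit S.det := isUnit_iff_ne_zero.mpr hS.det_pos.ne'
  have ha0 : a ≠ 0 := by
    intro h
    apply hμ
    have hSa : S.mulVec (S⁻¹.mulVec (μ₁ - μ₂)) = μ₁ - μ₂ := by
      rw [Matrix.mulVec_mulVec, Matrix.mul_nonsing_inv _ hdet, Matrix.one_mulVec]
    rw [← ha', h, Matrix.mulVec_zero] at hSa
    exact sub_eq_zero.mp hSa.symm
  have hsum_pos : 0 < ∑ i, a i ^ 2 := by
    rcases Function.ne_iff.mp ha0 with ⟨i, hi⟩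
    refine Finset.sum_pos' (fun j _ => sq_nonneg _) ⟨i, Finset.mem_univ i, ?_⟩
    have : a i ≠ 0 := hi
    positivity
  have hc : (∑ k, a k ^ 2)⁻¹ * (∑ k, a k ^ 2) = 1 := inv_mul_cancel₀ hsum_pos.ne'
  -- a i as a sum
  have hai : ∀ i, a i = ∑ j, S⁻¹ i j * (μ₁ j - μ₂ j) := by
    intro i
    rw [ha']
    simp [Matrix.mulVec, dotProduct, Pi.sub_apply]
  -- abbreviations
  set u : Fin D → ℝ := fun i => ∑ j, S⁻¹ i j * (x j - μ' j) with hu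
  set T : ℝ := ∑ j, a j * (x j - μ' j) with hT
  have hui : ∀ i, (∑ j, S⁻¹ i j * (x j - μ' j)) = u i := fun i => rfl
  -- gvec formulas
  have hg1 : ∀ i, gvec S⁻¹ μ₁ x i = 2 * u i - a i := by
    intro i
    unfold gvec
    have hterm : ∀ j, (S⁻¹ i j + S⁻¹ j i) * (x j - μ₁ j)
        = 2 * (S⁻¹ i j * (x j - μ' j)) - S⁻¹ i j * (μ₁ j - μ₂ j) := by
      intro j
      rw [hMsymm i j, hμ'' j]
      ring
    rw [Finset.sum_congr rfl fun j _ => hterm j, Finset.sum_sub_distrib, ← Finset.mul_sum,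
      hui, ← hai]
  have hg2 : ∀ i, gvec S⁻¹ μ₂ x i = 2 * u i + a i := by
    intro i
    unfold gvec
    have hterm : ∀ j, (S⁻¹ i j + S⁻¹ j i) * (x j - μ₂ j)
        = 2 * (S⁻¹ i j * (x j - μ' j)) + S⁻¹ i j * (μ₁ j - μ₂ j) := by
      intro j
      rw [hMsymm i j, hμ'' j]
      ring
    rw [Finset.sum_congr rfl fun j _ => hterm j, Finset.sum_add_distrib, ← Finset.mul_sum,
      hui, ← hai]
  have hgA : ∀ i, gvec A μ' x i
      = 2 * (b * (x i - μ' i) - b * (∑ k, a k ^ 2)⁻¹ * a i * T - u i) := by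
    intro i
    unfold gvec
    have hterm : ∀ j, (A i j + A j i) * (x j - μ' j)
        = (2 * b * ((if i = j then (1:ℝ) else 0) * (x j - μ' j))
            - 2 * b * (∑ k, a k ^ 2)⁻¹ * a i * (a j * (x j - μ' j)))
          - 2 * (S⁻¹ i j * (x j - μ' j)) := by
      intro j
      rw [hAij i j, hAij j i, hMsymm i j]
      have hif : (if j = i then (1:ℝ) else 0) = (if i = j then (1:ℝ) else 0) := by
        simp [eq_comm]
      rw [hif]
      ring
    rw [Finset.sum_congr rfl fun j _ => hterm j, Finset.sum_sub_distrib,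
      Finset.sum_sub_distrib, ← Finset.mul_sum, ← Finset.mul_sum, ← Finset.mul_sum, hui, ← hT]
    rw [show (∑ j, (if i = j then (1:ℝ) else 0) * (x j - μ' j)) = x i - μ' i by
      simp [ite_mul, Finset.sum_ite_eq]]
    ring
  -- the inner product term
  have hgradf : HasFDerivAt (fun y : EuclideanSpace ℝ (Fin D) =>
        -(1 / 2) * quadForm A (fun i => y i - μ' i))
      ((-(1 / 2) : ℝ) • gclm A μ' x) x := (hasFDerivAt_quad A μ' x).const_mul _
  have hinner : (inner ℝ (gradient (fun y => Real.log (α y)) x)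
          (WithLp.toLp 2 (fun i => S⁻¹.mulVec (μ₁ - μ₂) i : Fin D → ℝ) :
            EuclideanSpace ℝ (Fin D)) : ℝ)
      = -(1 / 2) * ∑ i, gvec A μ' x i * a i := by
    rw [hα]
    simp only [Real.log_exp]
    unfold gradient
    rw [InnerProductSpace.toDual_symm_apply, hgradf.fderiv]
    rw [ContinuousLinearMap.smul_apply, gclm_apply, smul_eq_mul]
  -- the Laplacian terms
  have hlap : ∀ μ₀ : Fin D → ℝ, lap (gaussDensity μ₀ S) x / gaussDensity μ₀ S x
      = ∑ i, ((1 / 4) * (gvec S⁻¹ μ₀ x i) ^ 2 - S⁻¹ i i) := by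
    intro μ₀
    have h1 : gaussDensity μ₀ S = fun y => ((2 * π) ^ (-(D : ℝ) / 2) * S.det ^ (-(1:ℝ) / 2)) *
        Real.exp (-(1 / 2) * quadForm S⁻¹ (fun i => y i - μ₀ i)) := rfl
    have hne : ((2 * π) ^ (-(D : ℝ) / 2) * S.det ^ (-(1:ℝ) / 2)) *
        Real.exp (-(1 / 2) * quadForm S⁻¹ (fun i => x i - μ₀ i)) ≠ 0 := by
      have h2 := hS.det_pos
      have h3 := Real.exp_pos (-(1 / 2) * quadForm S⁻¹ (fun i => x i - μ₀ i))
      have h4 : (0:ℝ) < 2 * π := by positivity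
      positivity
    have hnum : lap (gaussDensity μ₀ S) x
        = ((2 * π) ^ (-(D : ℝ) / 2) * S.det ^ (-(1:ℝ) / 2)) *
          Real.exp (-(1 / 2) * quadForm S⁻¹ (fun i => x i - μ₀ i)) *
          ∑ i, ((1 / 4) * (gvec S⁻¹ μ₀ x i) ^ 2 - S⁻¹ i i) := by
      rw [h1]
      exact lap_gaussLike _ _ _ _
    have hden : gaussDensity μ₀ S x
        = ((2 * π) ^ (-(D : ℝ) / 2) * S.det ^ (-(1:ℝ) / 2)) *
          Real.exp (-(1 / 2) * quadForm S⁻¹ (fun i => x i - μ₀ i)) := rfl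
    rw [hnum, hden, mul_comm, mul_div_assoc, div_self hne, mul_one]
  -- final computation
  rw [hinner, hp₁, hp₂, hlap μ₁, hlap μ₂]
  have e1 : ∑ i, gvec A μ' x i * a i = -2 * ∑ i, u i * a i := by
    rw [Finset.sum_congr rfl fun i _ => by rw [hgA i]]
    have hterm : ∀ i, 2 * (b * (x i - μ' i) - b * (∑ k, a k ^ 2)⁻¹ * a i * T - u i) * a i
        = 2 * b * (a i * (x i - μ' i)) - 2 * b * (∑ k, a k ^ 2)⁻¹ * T * a i ^ 2
          - 2 * (u i * a i) := by
      intro i; ring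
    rw [Finset.sum_congr rfl fun i _ => hterm i, Finset.sum_sub_distrib, Finset.sum_sub_distrib,
      ← Finset.mul_sum, ← Finset.mul_sum, ← Finset.mul_sum, ← hT]
    have h5 : 2 * b * (∑ k, a k ^ 2)⁻¹ * T * ∑ i, a i ^ 2
        = 2 * b * T * ((∑ k, a k ^ 2)⁻¹ * (∑ k, a k ^ 2)) := by ring
    rw [h5, hc]
    ring
  have e2 : (∑ i, ((1 / 4) * (gvec S⁻¹ μ₁ x i) ^ 2 - S⁻¹ i i))
      - (∑ i, ((1 / 4) * (gvec S⁻¹ μ₂ x i) ^ 2 - S⁻¹ i i)) = -2 * ∑ i, u i * a i := by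
    rw [← Finset.sum_sub_distrib]
    have hterm : ∀ i, (1 / 4) * (gvec S⁻¹ μ₁ x i) ^ 2 - S⁻¹ i i
        - ((1 / 4) * (gvec S⁻¹ μ₂ x i) ^ 2 - S⁻¹ i i) = -2 * (u i * a i) := by
      intro i
      rw [hg1 i, hg2 i]
      ring
    rw [Finset.sum_congr rfl fun i _ => hterm i, ← Finset.mul_sum]
  rw [e1, e2]
  ring
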